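/- Let k be an infinite field, let d ≥ 1, and let f ∈ k[x₀,x₁,x₂,x₃] be a homogeneous polynomial of degree d whose dehomogenization g := f(1,x₁,x₂,x₃) ∈ k[x₁,x₂,x₃] is irreducible, and let F := Frac(k[x₁,x₂,x₃]/(g)) be the function field of the surface X = {f = 0} ⊂ ℙ³_k. Then there exists an intermediate field k ⊆ E ⊆ F such that F is a finite extension of E of degree [F : E] ≤ d and E is isomorphic as a k-algebra to the rational function field k(t₁,t₂). (Projection from a rational point of ℙ³ not on X shows that the degree of irrationality of a degree-d surface in ℙ³ over an infinite field is at most d.) -/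

import Mathlib

open MvPolynomial

/-- The rational function field `k(t₁,t₂)`: the fraction field of the polynomial
ring in two variables over `k`. -/
noncomputable abbrev RatFunc2 (k : Type*) [Field k] : Type _ :=
  FractionRing (MvPolynomial (Fin 2) k)

/-- The degree of irrationality of a field extension `F/k`: the minimum of the degrees
`[F : E]` over all intermediate fields `k ⊆ E ⊆ F` such that `F/E` is finite and `E` is
`k`-isomorphic to the rational function field `k(t₁,t₂)`. -/
noncomputable def degreeOfIrrationality (k F : Type*) [Field k] [Field F] [Algebra k F] : ℕ :=
  sInf {n : ℕ | ∃ E : IntermediateField k F,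
    Nonempty (↥E ≃ₐ[k] RatFunc2 k) ∧
    FiniteDimensional ↥E F ∧ Module.finrank (↥E) F = n}

/-- Substituting polynomials of total degree at most 1 into a homogeneous polynomial of
degree `d` yields a polynomial of total degree at most `d`. -/
private lemma totalDegree_aeval_le_aux {k : Type} [Field k] {d : ℕ}
    (f : MvPolynomial (Fin 4) k) (hdeg : f.IsHomogeneous d)
    (s : Fin 4 → MvPolynomial (Fin 3) k) (hs : ∀ i, (s i).totalDegree ≤ 1) :
    (aeval s f).totalDegree ≤ d := by
  conv_lhs => rw [f.as_sum, map_sum]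
  refine (totalDegree_finset_sum _ _).trans (Finset.sup_le fun m hm => ?_)
  rw [aeval_monomial]
  refine (totalDegree_mul _ _).trans ?_
  have h1 : ((algebraMap k (MvPolynomial (Fin 3) k)) (coeff m f)).totalDegree = 0 :=
    totalDegree_C _
  rw [h1, zero_add]
  have h2 : (m.prod fun i e => s i ^ e).totalDegree ≤ ∑ i ∈ m.support, m i := by
    rw [Finsupp.prod]
    refine (totalDegree_finset_prod _ _).trans (Finset.sum_le_sum fun i _ => ?_)
    refine (totalDegree_pow _ _).trans ?_
    calc m i * (s i).totalDegree ≤ m i * 1 := Nat.mul_le_mul_left _ (hs i)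
      _ = m i := Nat.mul_one _
  refine h2.trans ?_
  have hw := hdeg (mem_support_iff.mp hm)
  have : Finsupp.degree m = d := by
    rw [Finsupp.degree_eq_weight_one]; exact hw
  rw [← this]
  rfl

/-- Over an infinite field, an irreducible degree-`d` surface in `ℙ³` admits a dominant
rational map to `ℙ²` of degree at most `d`: its function field `F` contains an
intermediate field `E ≅ k(t₁,t₂)` with `[F : E] ≤ d`. -/
theorem exists_rational_subfield_of_degree_le
    (k : Type) [Field k] (hk : Infinite k)
    (d : ℕ) (hd : 1 ≤ d)
    (f : MvPolynomial (Fin 4) k) (hdeg : f.IsHomogeneous d)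
    (g : MvPolynomial (Fin 3) k) (hg : g = aeval (Fin.cons 1 X) f)
    (hirr : Irreducible g)
    (F : Type) [Field F] [Algebra k F]
    [Algebra (MvPolynomial (Fin 3) k ⧸ Ideal.span {g}) F]
    [IsScalarTower k (MvPolynomial (Fin 3) k ⧸ Ideal.span {g}) F]
    [IsFractionRing (MvPolynomial (Fin 3) k ⧸ Ideal.span {g}) F] :
    ∃ E : IntermediateField k F,
      Nonempty (↥E ≃ₐ[k] RatFunc2 k) ∧
      FiniteDimensional ↥E F ∧ Module.finrank (↥E) F ≤ d := by
  classical
  have hg0 : g ≠ 0 := hirr.ne_zero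
  have hprime : Prime g := (UniqueFactorizationMonoid.irreducible_iff_prime).mp hirr
  haveI hP : (Ideal.span {g}).IsPrime := (Ideal.span_singleton_prime hg0).mpr hprime
  haveI : IsDomain (MvPolynomial (Fin 3) k ⧸ Ideal.span {g}) := Ideal.Quotient.isDomain _
  -- total degree bound
  have hgd : g.totalDegree ≤ d := by
    rw [hg]
    refine totalDegree_aeval_le_aux f hdeg _ ?_
    intro i
    refine Fin.cases ?_ ?_ i
    · simp
    · intro j; simp [totalDegree_X]
  -- some variable occurs in g
  have hconst : g.totalDegree ≠ 0 := by
    intro h0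
    rw [totalDegree_eq_zero_iff] at h0
    have hgC : g = C (coeff 0 g) := by
      apply MvPolynomial.ext
      intro m
      rcases eq_or_ne m 0 with rfl | hm
      · simp
      · rw [coeff_C, if_neg (Ne.symm hm)]
        by_contra hc
        exact hm (Finsupp.ext (h0 m (mem_support_iff.mpr hc)))
    have hc0 : coeff 0 g ≠ 0 := fun hc => hg0 (by rw [hgC, hc, map_zero])
    exact hirr.not_isUnit (hgC ▸ (isUnit_iff_ne_zero.mpr hc0).map (C : k →+* MvPolynomial (Fin 3) k))
  obtain ⟨i, hi⟩ : ∃ i, 0 < degreeOf i g := by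
    by_contra hcon
    push_neg at hcon
    apply hconst
    rw [totalDegree_eq_zero_iff]
    intro m hm x
    have h1 : m x ≤ degreeOf x g := by
      rw [degreeOf_eq_sup]; exact Finset.le_sup (f := fun m' => m' x) hm
    have h2 := hcon x
    omega
  -- set-up: the generators of the function field
  let w : Fin 3 → Fin 3 := ⇑(Equiv.swap (0 : Fin 3) i)
  have hww : ∀ m, w (w m) = m := fun m => Equiv.swap_apply_self _ _ m
  have hwinj : Function.Injective w := (Equiv.swap _ _).injective
  have hcomp : w ∘ w = id := funext hww
  let y : Fin 3 → F := fun m =>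
    algebraMap (MvPolynomial (Fin 3) k ⧸ Ideal.span {g}) F
      (Ideal.Quotient.mk (Ideal.span {g}) (X m))
  have key : ∀ p : MvPolynomial (Fin 3) k,
      aeval y p = algebraMap (MvPolynomial (Fin 3) k ⧸ Ideal.span {g}) F
        (Ideal.Quotient.mk (Ideal.span {g}) p) := by
    intro p
    have h1 : (aeval y : MvPolynomial (Fin 3) k →ₐ[k] F) =
        (IsScalarTower.toAlgHom k (MvPolynomial (Fin 3) k ⧸ Ideal.span {g}) F).comp
          (Ideal.Quotient.mkₐ k (Ideal.span {g})) := by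
      apply MvPolynomial.algHom_ext
      intro m
      simp [y]
    exact DFunLike.congr_fun h1 p
  let y' : Fin 3 → F := fun m => y (w m)
  let y'' : Fin 2 → F := fun m => y' m.succ
  let h : MvPolynomial (Fin 3) k := rename w g
  have hyw : y' ∘ w = y := by funext m; simp only [y', Function.comp_apply, hww]
  have haevalh : aeval y' h = 0 := by
    have h1 : aeval y' h = aeval y g := by rw [aeval_rename, hyw]
    rw [h1, key,
      Ideal.Quotient.eq_zero_iff_mem.mpr (Ideal.mem_span_singleton.mpr dvd_rfl), map_zero]
  have hh0 : h ≠ 0 := fun hz =>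
    hg0 (rename_injective w hwinj (by rw [map_zero]; exact hz))
  have hdeg0h : degreeOf 0 h = degreeOf i g := by
    have h1 := degreeOf_rename_of_injective (p := g) hwinj i
    have hwi : w i = 0 := Equiv.swap_apply_right _ _
    rwa [hwi] at h1
  -- a helper: `finSuccEquiv` applied to a polynomial in the last two variables
  have hCrn : ∀ r : MvPolynomial (Fin 2) k,
      finSuccEquiv k 2 (rename (Fin.succ : Fin 2 → Fin 3) r) = Polynomial.C r := by
    intro r
    have h2 : ((finSuccEquiv k 2 : MvPolynomial (Fin 3) k ≃ₐ[k] _).toAlgHom.comp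
        (rename (Fin.succ : Fin 2 → Fin 3)) :
        MvPolynomial (Fin 2) k →ₐ[k] Polynomial (MvPolynomial (Fin 2) k)) =
        IsScalarTower.toAlgHom k (MvPolynomial (Fin 2) k)
          (Polynomial (MvPolynomial (Fin 2) k)) := by
      apply MvPolynomial.algHom_ext
      intro m
      simp [finSuccEquiv_X_succ, Polynomial.algebraMap_eq]
    have h3 := DFunLike.congr_fun h2 r
    simpa [Polynomial.algebraMap_eq] using h3
  -- algebraic independence of the last two generators
  have hinj : Function.Injective (aeval y'' : MvPolynomial (Fin 2) k →ₐ[k] F) := by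
    rw [injective_iff_map_eq_zero]
    intro p hp
    have e1 : aeval y'' p = aeval y (rename w (rename (Fin.succ : Fin 2 → Fin 3) p)) := by
      rw [aeval_rename, aeval_rename]; rfl
    rw [e1, key] at hp
    have hp2 : rename w (rename (Fin.succ : Fin 2 → Fin 3) p) ∈ Ideal.span {g} := by
      rw [← Ideal.Quotient.eq_zero_iff_mem]
      exact IsFractionRing.injective (MvPolynomial (Fin 3) k ⧸ Ideal.span {g}) F
        (by rw [hp, map_zero])
    obtain ⟨q, hq⟩ := Ideal.mem_span_singleton.mp hp2
    have hq2 : rename (Fin.succ : Fin 2 → Fin 3) p = h * rename w q := by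
      have h4 := congrArg (rename w) hq
      rwa [rename_rename, hcomp, rename_id, map_mul] at h4
    have hfin : Polynomial.C p = finSuccEquiv k 2 h * finSuccEquiv k 2 (rename w q) := by
      rw [← hCrn p, hq2, map_mul]
    by_contra hp0
    have hCq : finSuccEquiv k 2 (rename w q) ≠ 0 := by
      intro hz
      rw [hz, mul_zero] at hfin
      exact hp0 (Polynomial.C_eq_zero.mp hfin)
    have hCh : finSuccEquiv k 2 h ≠ 0 := fun hz =>
      hh0 ((map_eq_zero_iff _ (finSuccEquiv k 2).injective).mp hz)
    have h5 := congrArg Polynomial.natDegree hfin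
    rw [Polynomial.natDegree_C, Polynomial.natDegree_mul hCh hCq,
      natDegree_finSuccEquiv, hdeg0h] at h5
    omega
  -- the intermediate field generated by the last two generators
  let E : IntermediateField k F := IntermediateField.adjoin k (Set.range y'')
  have hmemE : ∀ r : MvPolynomial (Fin 2) k, aeval y'' r ∈ E.toSubalgebra := by
    intro r
    apply IntermediateField.algebra_adjoin_le_adjoin k
    rw [Algebra.adjoin_range_eq_range_aeval]
    exact ⟨r, rfl⟩
  let ψ : MvPolynomial (Fin 2) k →ₐ[k] ↥E :=
    AlgHom.codRestrict (aeval y'' : MvPolynomial (Fin 2) k →ₐ[k] F) E.toSubalgebra hmemE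
  have hψval : ∀ r, (ψ r : F) = aeval y'' r := fun r => rfl
  have hψinj : Function.Injective ψ := fun a b hab =>
    hinj (show aeval y'' a = aeval y'' b by rw [← hψval a, ← hψval b, hab])
  letI : Algebra (MvPolynomial (Fin 2) k) ↥E := ψ.toRingHom.toAlgebra
  have halgmap : ∀ r, algebraMap (MvPolynomial (Fin 2) k) ↥E r = ψ r := fun _ => rfl
  haveI : IsFractionRing (MvPolynomial (Fin 2) k) ↥E := by
    constructor
    constructor
    · intro v
      rw [halgmap, isUnit_iff_ne_zero]
      intro hz
      exact nonZeroDivisors.ne_zero v.2 (hψinj (by rw [hz, map_zero]))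
    · intro z
      have hz := z.2
      rw [IntermediateField.mem_adjoin_range_iff] at hz
      obtain ⟨r, s, hrs⟩ := hz
      by_cases hs : s = 0
      · refine ⟨⟨0, 1⟩, ?_⟩
        have hz0 : (z : F) = 0 := by rw [hrs, hs, map_zero, div_zero]
        refine Subtype.ext ?_
        show (z : F) * ((algebraMap (MvPolynomial (Fin 2) k) ↥E 1 : ↥E) : F) =
          ((algebraMap (MvPolynomial (Fin 2) k) ↥E 0 : ↥E) : F)
        rw [map_zero, map_one, hz0, zero_mul]
        rfl
      · refine ⟨⟨r, ⟨s, mem_nonZeroDivisors_of_ne_zero hs⟩⟩, ?_⟩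
        refine Subtype.ext ?_
        show (z : F) * aeval y'' s = aeval y'' r
        rw [hrs, div_mul_cancel₀]
        exact (map_ne_zero_iff _ hinj).mpr hs
    · intro a b hab
      exact ⟨1, by rw [hψinj hab]⟩
  haveI : IsScalarTower k (MvPolynomial (Fin 2) k) ↥E :=
    IsScalarTower.of_algebraMap_eq fun c => (ψ.commutes c).symm
  have equiv2 : ↥E ≃ₐ[k] RatFunc2 k :=
    (AlgEquiv.restrictScalars k
      (IsLocalization.algEquiv (nonZeroDivisors (MvPolynomial (Fin 2) k)) (RatFunc2 k) ↥E)).symm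
  -- `x₀ := y' 0` is algebraic of degree at most `d` over `E` and generates `F` over `E`
  let x₀ : F := y' 0
  let G : Polynomial (MvPolynomial (Fin 2) k) := finSuccEquiv k 2 h
  let P : Polynomial ↥E := G.map ψ.toRingHom
  have hG0 : G ≠ 0 := fun hz => hh0 ((map_eq_zero_iff _ (finSuccEquiv k 2).injective).mp hz)
  have hP0 : P ≠ 0 := (Polynomial.map_ne_zero_iff hψinj).mpr hG0
  have hGdeg : G.natDegree ≤ d := by
    show (finSuccEquiv k 2 h).natDegree ≤ d
    rw [natDegree_finSuccEquiv, hdeg0h]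
    exact (degreeOf_le_totalDegree g i).trans hgd
  have hroot : Polynomial.aeval x₀ P = 0 := by
    have e2 : ∀ q : MvPolynomial (Fin 3) k,
        Polynomial.eval₂
          ((aeval y'' : MvPolynomial (Fin 2) k →ₐ[k] F) : MvPolynomial (Fin 2) k →+* F)
          x₀ (finSuccEquiv k 2 q) = aeval y' q := by
      intro q
      have h6 : (Polynomial.eval₂RingHom
          ((aeval y'' : MvPolynomial (Fin 2) k →ₐ[k] F) : MvPolynomial (Fin 2) k →+* F)
            x₀).comp
          ((finSuccEquiv k 2 : MvPolynomial (Fin 3) k ≃ₐ[k]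
            Polynomial (MvPolynomial (Fin 2) k)) : MvPolynomial (Fin 3) k →+* _) =
          ((aeval y' : MvPolynomial (Fin 3) k →ₐ[k] F) : MvPolynomial (Fin 3) k →+* F) := by
        apply MvPolynomial.ringHom_ext
        · intro c
          simp [finSuccEquiv_apply]
        · intro m
          refine Fin.cases ?_ ?_ m
          · simp [finSuccEquiv_X_zero, x₀]
          · intro j
            simp [finSuccEquiv_X_succ, y'']
      exact DFunLike.congr_fun h6 q
    have e3 : Polynomial.aeval x₀ P = Polynomial.eval₂
        ((aeval y'' : MvPolynomial (Fin 2) k →ₐ[k] F) : MvPolynomial (Fin 2) k →+* F)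
        x₀ G := by
      rw [Polynomial.aeval_def, Polynomial.eval₂_map]
      congr 1
    rw [e3, e2, haevalh]
  have hisalg : IsAlgebraic ↥E x₀ := ⟨P, hP0, hroot⟩
  have halg : IsIntegral ↥E x₀ := hisalg.isIntegral
  have hminle : (minpoly ↥E x₀).natDegree ≤ d := by
    have h7 := minpoly.degree_le_of_ne_zero ↥E x₀ hP0 hroot
    have h8 := Polynomial.natDegree_le_natDegree h7
    exact h8.trans (le_trans Polynomial.natDegree_map_le hGdeg)
  -- `F` is generated by `x₀` over `E`
  have hKmem : ∀ p : MvPolynomial (Fin 3) k,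
      aeval y p ∈ IntermediateField.adjoin ↥E {x₀} := by
    intro p
    have hle : Algebra.adjoin k (Set.range y) ≤
        Subalgebra.restrictScalars k (IntermediateField.adjoin ↥E {x₀}).toSubalgebra := by
      rw [Algebra.adjoin_le_iff]
      rintro _ ⟨m, rfl⟩
      rw [SetLike.mem_coe, Subalgebra.mem_restrictScalars]
      have hym : y m = y' (w m) := by simp only [y', hww]
      rw [hym]
      refine Fin.cases ?_ ?_ (w m)
      · exact IntermediateField.subset_adjoin _ _ rfl
      · intro j
        have hmem : y' j.succ ∈ E := IntermediateField.subset_adjoin k _ ⟨j, rfl⟩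
        exact (IntermediateField.adjoin ↥E {x₀}).algebraMap_mem ⟨y' j.succ, hmem⟩
    have h10 : aeval y p ∈ Algebra.adjoin k (Set.range y) := by
      rw [Algebra.adjoin_range_eq_range_aeval]; exact ⟨p, rfl⟩
    have h11 := hle h10
    rwa [Subalgebra.mem_restrictScalars] at h11
  have htop : IntermediateField.adjoin ↥E {x₀} = ⊤ := by
    rw [eq_top_iff]
    rintro z -
    obtain ⟨a, b, hb, rfl⟩ := IsFractionRing.div_surjective
      (A := MvPolynomial (Fin 3) k ⧸ Ideal.span {g}) z
    obtain ⟨p, rfl⟩ := Ideal.Quotient.mk_surjective a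
    obtain ⟨q, rfl⟩ := Ideal.Quotient.mk_surjective b
    exact div_mem (by rw [← key]; exact hKmem p) (by rw [← key]; exact hKmem q)
  haveI hfd : FiniteDimensional ↥E ↥(IntermediateField.adjoin ↥E {x₀}) :=
    IntermediateField.adjoin.finiteDimensional halg
  have lequiv : ↥(IntermediateField.adjoin ↥E {x₀}) ≃ₗ[↥E] F := by
    rw [htop]; exact IntermediateField.topEquiv.toLinearEquiv
  haveI hfinF : FiniteDimensional ↥E F := Module.Finite.equiv lequiv
  have hrank : Module.finrank ↥E F ≤ d := by
    have h9 : Module.finrank ↥E F = (minpoly ↥E x₀).natDegree := by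
      rw [← IntermediateField.adjoin.finrank halg]
      exact lequiv.finrank_eq.symm
    rw [h9]; exact hminle
  exact ⟨E, ⟨equiv2⟩, hfinF, hrank⟩
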